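/- Let F^B_x be a pattern on n_B × m_B matrices over a field with every determined entry equal to 0 or 1, and for each j ∈ Fin m_B let F^{(j)}_x be a pattern on n_j × m_j matrices. Define the jointly extended pattern F^E_x whose (i,j)-th block (for i ∈ Fin n_B, j ∈ Fin m_B) equals: F^{(j)}_x if F^B_x(i,j) = some 1; the all-zero determined pattern if F^B_x(i,j) = some 0; and the all-unknown pattern if F^B_x(i,j) = none. Suppose M_x is a square subpattern of F^B_x, obtained by restricting to row set R and column set C with |R| = |C|, that is upper-triangulable with unit diagonal (after permutations of its rows and columns it has some 1 on the diagonal and some 0 strictly below). Then minrank(F^E_x) ≥ Σ_{j ∈ C} minrank(F^{(j)}_x). -/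

import Mathlib

/-- A pattern: a partially specified matrix, `none` denoting an unknown entry. -/
def Pattern (α β F : Type*) := α → β → Option F

/-- A matrix `M` completes a pattern `A` if it agrees with all determined entries. -/
def Completes {α β F : Type*} (M : Matrix α β F) (A : Pattern α β F) : Prop :=
  ∀ i j c, A i j = some c → M i j = c

/-- The minrank of a pattern: the minimum rank over all its completions. -/
noncomputable def minrank {α β F : Type*} [Fintype α] [Fintype β] [Field F]
    (A : Pattern α β F) : ℕ :=
  sInf {r | ∃ M : Matrix α β F, Completes M A ∧ M.rank = r}

open Module Submodule Matrix

lemma rank_reindex_rect {R : Type*} [CommRing R] {k l m n : Type*}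
    [Fintype l] [Fintype n] (e₁ : k ≃ m) (e₂ : l ≃ n) (A : Matrix k l R) :
    (Matrix.reindex e₁ e₂ A).rank = A.rank := by
  rw [Matrix.rank, Matrix.rank, Matrix.mulVecLin_reindex, LinearMap.range_comp,
    LinearMap.range_comp, LinearEquiv.range, Submodule.map_top, LinearEquiv.finrank_map_eq]

lemma rank_submatrix_rect {R : Type*} [CommRing R] {k l m n : Type*}
    [Fintype l] [Fintype n] (e₁ : m ≃ k) (e₂ : n ≃ l) (A : Matrix k l R) :
    (A.submatrix e₁ e₂).rank = A.rank := by
  simpa only [Matrix.reindex_apply, Equiv.symm_symm] using rank_reindex_rect e₁.symm e₂.symm A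

lemma exists_indep_cols {F n m : Type*} [Field F] [Fintype n] [Fintype m]
    (A : Matrix n m F) :
    ∃ t : Fin A.rank → m, LinearIndependent F (fun i => fun r => A r (t i)) := by
  classical
  obtain ⟨b, hbt, hsp, hind⟩ := exists_linearIndependent F (Set.range Aᵀ)
  have hfin : b.Finite := by
    have := hind.lt_aleph0_of_finite
    rwa [Cardinal.lt_aleph0_iff_set_finite] at this
  haveI : Fintype b := hfin.fintype
  have hcard : Fintype.card b = A.rank := by
    rw [Matrix.rank_eq_finrank_span_cols, show A.col = Aᵀ from rfl, ← hsp, finrank_span_set_eq_card hind,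
      Set.toFinset_card]
  let e : Fin A.rank ≃ b := (Fintype.equivFinOfCardEq hcard).symm
  have hpre : ∀ x : b, ∃ i : m, Aᵀ i = (x : n → F) := fun x => hbt x.2
  choose f hf using hpre
  refine ⟨fun i => f (e i), ?_⟩
  have : (fun i => fun r => A r (f (e i))) = (Subtype.val : b → n → F) ∘ e := by
    funext i
    exact hf (e i)
  rw [this]
  exact hind.comp e e.injective


/-- Lower bound (Lemma 1): if the base pattern `FB` contains a square subpattern on rows `ρ`
and columns `γ` that is upper-triangulable with unit diagonal, then the minrank of the jointly
extended pattern `E` is at least the sum of the minranks of the component patterns indexed by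
the columns of the subpattern. -/
theorem minrank_extension_lower_bound {F : Type*} [Field F] (nB mB : ℕ)
    (FB : Pattern (Fin nB) (Fin mB) F)
    (hFB01 : ∀ i j c, FB i j = some c → c = 0 ∨ c = 1)
    (nj mj : Fin mB → ℕ) (h : Fin nB → ℕ)
    (Fj : (j : Fin mB) → Pattern (Fin (nj j)) (Fin (mj j)) F)
    (heq : ∀ i j, FB i j = some 1 → h i = nj j)
    (E : Pattern ((i : Fin nB) × Fin (h i)) ((j : Fin mB) × Fin (mj j)) F)
    (hE1 : ∀ (i : Fin nB) (j : Fin mB) (hij : FB i j = some 1) (a : Fin (h i)) (b : Fin (mj j)),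
      E ⟨i, a⟩ ⟨j, b⟩ = Fj j (Fin.cast (heq i j hij) a) b)
    (hE0 : ∀ (i : Fin nB) (j : Fin mB), FB i j = some 0 →
      ∀ (a : Fin (h i)) (b : Fin (mj j)), E ⟨i, a⟩ ⟨j, b⟩ = some 0)
    (hEx : ∀ (i : Fin nB) (j : Fin mB), FB i j = none →
      ∀ (a : Fin (h i)) (b : Fin (mj j)), E ⟨i, a⟩ ⟨j, b⟩ = none)
    (s : ℕ) (ρ : Fin s ↪ Fin nB) (γ : Fin s ↪ Fin mB)
    (σ τ : Equiv.Perm (Fin s))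
    (hdiag : ∀ i : Fin s, FB (ρ (σ i)) (γ (τ i)) = some 1)
    (hlow : ∀ i j : Fin s, j < i → FB (ρ (σ i)) (γ (τ j)) = some 0) :
    ∑ i : Fin s, minrank (Fj (γ i)) ≤ minrank E := by
  classical
  -- a completion of `E` achieving the minrank
  have hset : (minrank E) ∈
      {r | ∃ M : Matrix ((i : Fin nB) × Fin (h i)) ((j : Fin mB) × Fin (mj j)) F,
        Completes M E ∧ M.rank = r} := by
    apply Nat.sInf_mem
    refine ⟨Matrix.rank (fun r c => (E r c).getD 0),
      (fun r c => (E r c).getD 0 : Matrix _ _ F), ?_, rfl⟩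
    intro i j c hc
    show (E i j).getD 0 = c
    rw [hc]
    rfl
  obtain ⟨M, hM, hMr⟩ := hset
  rw [← hMr]
  set I : Fin s → Fin nB := fun k => ρ (σ k) with hI
  set J : Fin s → Fin mB := fun k => γ (τ k) with hJ
  let D : (k : Fin s) → Matrix (Fin (h (I k))) (Fin (mj (J k))) F :=
    fun k a b => M ⟨I k, a⟩ ⟨J k, b⟩
  -- per-block minrank bound
  have hblock : ∀ k : Fin s, minrank (Fj (J k)) ≤ (D k).rank := by
    intro k
    have e1 : h (I k) = nj (J k) := heq _ _ (hdiag k)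
    have hr : ((D k).submatrix (finCongr e1.symm) (Equiv.refl _)).rank = (D k).rank :=
      rank_submatrix_rect _ _ _
    refine le_trans (Nat.sInf_le ?_) hr.le
    refine ⟨(D k).submatrix (finCongr e1.symm) (Equiv.refl _), ?_, rfl⟩
    intro a b c hc
    refine hM _ _ c ?_
    show E ⟨I k, Fin.cast e1.symm a⟩ ⟨J k, b⟩ = some c
    rw [hE1 (I k) (J k) (hdiag k)]
    exact hc
  -- choose independent columns in each diagonal block
  choose t ht using fun k => exists_indep_cols (D k)
  -- the corresponding full columns of `M`
  let v : ((k : Fin s) × Fin (D k).rank) → ((i : Fin nB) × Fin (h i)) → F :=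
    fun p row => M row ⟨J p.1, t p.1 p.2⟩
  have hv : LinearIndependent F v := by
    rw [Fintype.linearIndependent_iff]
    intro g hg
    have key : ∀ k : Fin s, (∀ k' : Fin s, k < k' → ∀ a, g ⟨k', a⟩ = 0) →
        ∀ a, g ⟨k, a⟩ = 0 := by
      intro k hk'
      have hDind := ht k
      rw [Fintype.linearIndependent_iff] at hDind
      apply hDind
      funext row
      have h0 := congrFun hg ⟨I k, row⟩
      rw [← Finset.univ_sigma_univ, Finset.sum_sigma] at h0
      simp only [Finset.sum_apply, Pi.smul_apply, smul_eq_mul, Pi.zero_apply] at h0 ⊢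
      rw [Finset.sum_eq_single k (fun k' _ hne => ?_) (fun hk => absurd (Finset.mem_univ k) hk)]
        at h0
      · exact h0
      · rcases hne.lt_or_gt with hlt | hgt
        · refine Finset.sum_eq_zero fun a _ => ?_
          have hz : M ⟨I k, row⟩ ⟨J k', t k' a⟩ = 0 :=
            hM _ _ 0 (hE0 (I k) (J k') (hlow k k' hlt) row (t k' a))
          show g ⟨k', a⟩ * M ⟨I k, row⟩ ⟨J k', t k' a⟩ = 0
          rw [hz, mul_zero]
        · refine Finset.sum_eq_zero fun a _ => ?_
          show g ⟨k', a⟩ * M ⟨I k, row⟩ ⟨J k', t k' a⟩ = 0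
          rw [hk' k' hgt a, zero_mul]
    have main : ∀ n : ℕ, ∀ k : Fin s, s ≤ (k : ℕ) + n → ∀ a, g ⟨k, a⟩ = 0 := by
      intro n
      induction n with
      | zero =>
        intro k hk
        have := k.isLt
        omega
      | succ n ih =>
        intro k hk
        refine key k fun k' hkk' a' => ih k' ?_ a'
        have h2 : (k : ℕ) < (k' : ℕ) := hkk'
        omega
    intro p
    exact main s p.1 (by omega) p.2
  -- each chosen column lies in the range of `M.mulVecLin`
  have hvmem : ∀ p, v p ∈ LinearMap.range M.mulVecLin := by
    intro p
    refine ⟨Pi.single ⟨J p.1, t p.1 p.2⟩ 1, ?_⟩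
    show M.mulVec _ = v p
    rw [Matrix.mulVec_single]
    funext row
    exact mul_one _
  let v' : ((k : Fin s) × Fin (D k).rank) → LinearMap.range M.mulVecLin :=
    fun p => ⟨v p, hvmem p⟩
  have hv' : LinearIndependent F v' := by
    apply LinearIndependent.of_comp (LinearMap.range M.mulVecLin).subtype
    exact hv
  have hcard := hv'.fintype_card_le_finrank
  calc ∑ i : Fin s, minrank (Fj (γ i))
      = ∑ k : Fin s, minrank (Fj (γ (τ k))) :=
        (Equiv.sum_comp τ fun i => minrank (Fj (γ i))).symm
    _ ≤ ∑ k : Fin s, (D k).rank := Finset.sum_le_sum fun k _ => hblock k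
    _ = Fintype.card ((k : Fin s) × Fin (D k).rank) := by
        rw [Fintype.card_sigma]
        simp
    _ ≤ finrank F (LinearMap.range M.mulVecLin) := hcard
    _ = M.rank := rfl
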